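/- Let g: ℝ^d → ℝ be λ-strongly convex, let v ∈ ℝ^d, τ > 0, and x^t ∈ ℝ^d. If x^{t+1} minimizes x ↦ g(x) + ⟨x, v⟩ + (1/(2τ))‖x − x^t‖₂², then for any x⋆ minimizing x ↦ g(x) + ⟨x, u⋆⟩ (where u⋆ ∈ ℝ^d): (1/(2τ))‖x^t − x⋆‖₂² ≥ (1/(2τ) + λ)‖x^{t+1} − x⋆‖₂² + (1/(2τ))‖x^{t+1} − x^t‖₂² + ⟨x^{t+1} − x⋆, v − u⋆⟩. -/

import Mathlib

open RealInnerProductSpace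

theorem primal_update_inequality
    (d : ℕ) (lam : ℝ) (hlam : 0 < lam)
    (g : EuclideanSpace ℝ (Fin d) → ℝ) (hgdiff : Differentiable ℝ g)
    (hgsc : ∀ x x' : EuclideanSpace ℝ (Fin d),
      g x' ≥ g x + ⟪gradient g x, x' - x⟫ + lam / 2 * ‖x' - x‖ ^ 2)
    (v ustar : EuclideanSpace ℝ (Fin d)) (τ : ℝ) (hτ : 0 < τ)
    (xt xnext xstar : EuclideanSpace ℝ (Fin d))
    (hmin : ∀ x : EuclideanSpace ℝ (Fin d),
      g xnext + ⟪xnext, v⟫ + 1 / (2 * τ) * ‖xnext - xt‖ ^ 2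
        ≤ g x + ⟪x, v⟫ + 1 / (2 * τ) * ‖x - xt‖ ^ 2)
    (hstar : ∀ x : EuclideanSpace ℝ (Fin d),
      g xstar + ⟪xstar, ustar⟫ ≤ g x + ⟪x, ustar⟫) :
    1 / (2 * τ) * ‖xt - xstar‖ ^ 2
      ≥ (1 / (2 * τ) + lam) * ‖xnext - xstar‖ ^ 2
        + 1 / (2 * τ) * ‖xnext - xt‖ ^ 2
        + ⟪xnext - xstar, v - ustar⟫ := by
  -- gradient condition at xstar : ⟪∇g xstar, y⟫ + ⟪ustar, y⟫ = 0
  have hstar_grad : ∀ y : EuclideanSpace ℝ (Fin d),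
      ⟪gradient g xstar, y⟫ + ⟪ustar, y⟫ = 0 := by
    intro y
    have hg1 : HasFDerivAt g
        ((InnerProductSpace.toDual ℝ _) (gradient g xstar)) xstar :=
      hasGradientAt_iff_hasFDerivAt.mp (hgdiff xstar).hasGradientAt
    have hfun : (fun x : EuclideanSpace ℝ (Fin d) => ⟪x, ustar⟫)
        = fun x => (innerSL ℝ ustar) x := funext fun x => real_inner_comm _ _
    have hlin : HasFDerivAt (fun x : EuclideanSpace ℝ (Fin d) => ⟪x, ustar⟫)
        (innerSL ℝ ustar) xstar := by
      rw [hfun]; exact (innerSL ℝ ustar).hasFDerivAt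
    have hsum := hg1.add hlin
    have hmin' : IsLocalMin (fun x => g x + ⟪x, ustar⟫) xstar :=
      Filter.Eventually.of_forall fun x => hstar x
    have h0 := hmin'.hasFDerivAt_eq_zero hsum
    have := congrArg (fun L : EuclideanSpace ℝ (Fin d) →L[ℝ] ℝ => L y) h0
    simpa [InnerProductSpace.toDual_apply_apply] using this
  -- gradient condition at xnext
  have hnext_grad : ∀ y : EuclideanSpace ℝ (Fin d),
      ⟪gradient g xnext, y⟫ + ⟪v, y⟫ + (1 / (2 * τ)) * (2 * ⟪xnext - xt, y⟫) = 0 := by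
    intro y
    have hg1 : HasFDerivAt g
        ((InnerProductSpace.toDual ℝ _) (gradient g xnext)) xnext :=
      hasGradientAt_iff_hasFDerivAt.mp (hgdiff xnext).hasGradientAt
    have hfun : (fun x : EuclideanSpace ℝ (Fin d) => ⟪x, v⟫)
        = fun x => (innerSL ℝ v) x := funext fun x => real_inner_comm _ _
    have hlin : HasFDerivAt (fun x : EuclideanSpace ℝ (Fin d) => ⟪x, v⟫)
        (innerSL ℝ v) xnext := by
      rw [hfun]; exact (innerSL ℝ v).hasFDerivAt
    have hq0 : HasFDerivAt (fun x : EuclideanSpace ℝ (Fin d) => x - xt)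
        (ContinuousLinearMap.id ℝ _) xnext := (hasFDerivAt_id xnext).sub_const xt
    have hq1 := hq0.norm_sq
    have hq2 : HasFDerivAt
        (fun x : EuclideanSpace ℝ (Fin d) => 1 / (2 * τ) * ‖x - xt‖ ^ 2)
        ((1 / (2 * τ)) • (2 • (innerSL ℝ (xnext - xt)).comp
          (ContinuousLinearMap.id ℝ _))) xnext := hq1.const_mul _
    have hsum := (hg1.add hlin).add hq2
    have hmin' : IsLocalMin
        (fun x => g x + ⟪x, v⟫ + 1 / (2 * τ) * ‖x - xt‖ ^ 2) xnext :=
      Filter.Eventually.of_forall fun x => hmin x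
    have h0 := hmin'.hasFDerivAt_eq_zero hsum
    have h0y := congrArg (fun L : EuclideanSpace ℝ (Fin d) →L[ℝ] ℝ => L y) h0
    simp only [ContinuousLinearMap.add_apply, ContinuousLinearMap.smul_apply,
      ContinuousLinearMap.comp_apply, ContinuousLinearMap.id_apply,
      ContinuousLinearMap.zero_apply, InnerProductSpace.toDual_apply_apply,
      innerSL_apply_apply, smul_eq_mul, two_smul] at h0y
    linarith [h0y]
  have key1 := hgsc xnext xstar
  have key2 := hgsc xstar xnext
  have e1 := hnext_grad (xstar - xnext)
  have e2 := hstar_grad (xnext - xstar)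
  have hτ' : (0:ℝ) < 2 * τ := by linarith
  -- rewrite norms as inner products
  have n1 : ‖xt - xstar‖ ^ 2 = ⟪xt - xstar, xt - xstar⟫ :=
    (real_inner_self_eq_norm_sq _).symm
  have n2 : ‖xnext - xstar‖ ^ 2 = ⟪xnext - xstar, xnext - xstar⟫ :=
    (real_inner_self_eq_norm_sq _).symm
  have n3 : ‖xnext - xt‖ ^ 2 = ⟪xnext - xt, xnext - xt⟫ :=
    (real_inner_self_eq_norm_sq _).symm
  have n4 : ‖xstar - xnext‖ ^ 2 = ⟪xnext - xstar, xnext - xstar⟫ := by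
    rw [norm_sub_rev]; exact (real_inner_self_eq_norm_sq _).symm
  rw [n4] at key1
  rw [n2] at key2
  rw [n1, n2, n3]
  -- expand everything bilinearly in terms of a = xnext - xt, b = xnext - xstar
  have hab : xt - xstar = (xnext - xstar) - (xnext - xt) := by abel
  have hsn : xstar - xnext = -(xnext - xstar) := by abel
  rw [hab]
  rw [hsn] at key1 e1
  set a := xnext - xt with ha
  set b := xnext - xstar with hb
  have exp1 : ⟪b - a, b - a⟫ = ⟪b, b⟫ - 2 * ⟪a, b⟫ + ⟪a, a⟫ := by
    rw [inner_sub_left (x := b) (y := a), inner_sub_right (x := b) (y := b) (z := a),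
      inner_sub_right (x := a) (y := b) (z := a), real_inner_comm a b]; ring
  have exp2 : ⟪gradient g xnext, -b⟫ = -⟪gradient g xnext, b⟫ := by
    simp [inner_neg_right]
  have exp3 : ⟪v, -b⟫ = -⟪v, b⟫ := by simp [inner_neg_right]
  have exp4 : ⟪a, -b⟫ = -⟪a, b⟫ := by simp [inner_neg_right]
  have exp5 : ⟪b, v - ustar⟫ = ⟪v, b⟫ - ⟪ustar, b⟫ := by
    rw [real_inner_comm]; simp [inner_sub_left]
  rw [exp1, exp5]
  rw [exp2] at key1
  rw [exp2, exp3, exp4] at e1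
  have hτne : (2 * τ) ≠ 0 := ne_of_gt hτ'
  nlinarith [key1, key2, e1, e2, mul_pos (mul_pos two_pos hτ) hlam,
    sq_nonneg ‖b‖, real_inner_self_eq_norm_sq b]
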